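/- Let K be an algebraically closed field of characteristic 0 and let A be a finitely generated integral domain over K. Suppose ∂₁ and ∂₂ are nonzero locally nilpotent K-derivations of A with ker ∂₁ ≠ ker ∂₂. Then there exist f₁ ∈ ker ∂₁ and f₂ ∈ ker ∂₂ such that the derivation f₁∂₁ + f₂∂₂ is not locally finite. In particular, the K-linear span of the locally nilpotent derivations of A contains a derivation that is not locally finite. -/

import Mathlib

/-- A `K`-derivation `δ` of `A` is locally nilpotent if for every `a ∈ A`
there exists `n ≥ 1` with `δⁿ a = 0`. -/
def IsLND {K A : Type*} [CommRing K] [CommRing A] [Algebra K A]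
    (δ : Derivation K A A) : Prop :=
  ∀ a : A, ∃ n : ℕ, 1 ≤ n ∧ (δ.toLinearMap ^ n) a = 0

/-- A `K`-derivation `δ` of `A` is locally finite if every `a ∈ A` lies in a
finite-dimensional `K`-subspace of `A` invariant under `δ`. -/
def IsLocFin {K A : Type*} [Field K] [CommRing A] [Algebra K A]
    (δ : Derivation K A A) : Prop :=
  ∀ a : A, ∃ V : Submodule K A, a ∈ V ∧ FiniteDimensional K V ∧ ∀ v ∈ V, δ v ∈ V

open Finset

namespace Stmt5

open Classical

theorem charZeroA (K A : Type*) [Field K] [CharZero K] [CommRing A] [Nontrivial A]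
    [Algebra K A] : CharZero A :=
  charZero_of_injective_algebraMap (algebraMap K A).injective

variable {K A : Type*} [Field K] [CharZero K] [CommRing A] [IsDomain A] [Algebra K A]

/-- twisted operator -/
noncomputable def T (d : Derivation K A A) (c : K) : Module.End K A :=
  d.toLinearMap - c • (1 : Module.End K A)

omit [CharZero K] [IsDomain A] in
lemma T_apply (d : Derivation K A A) (c : K) (x : A) : T d c x = d x - c • x := rfl

omit [CharZero K] [IsDomain A] in
lemma T_zero (d : Derivation K A A) : T d 0 = d.toLinearMap := by
  simp [T]

omit [CharZero K] [IsDomain A] in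
lemma T_mul (d : Derivation K A A) (lam mu : K) (x y : A) :
    T d (lam + mu) (x * y) = x * (T d mu y) + y * (T d lam x) := by
  simp only [T_apply, Derivation.leibniz, smul_eq_mul, add_smul]
  rw [Algebra.smul_def, Algebra.smul_def, Algebra.smul_def, Algebra.smul_def]
  ring

omit [CharZero K] [IsDomain A] in
lemma pow_succ_apply (f : Module.End K A) (n : ℕ) (z : A) :
    (f ^ (n+1)) z = (f ^ n) (f z) := by
  rw [pow_succ, Module.End.mul_apply]

omit [CharZero K] [IsDomain A] in
lemma end_pow_van {f : Module.End K A} {x : A} {k m : ℕ} (h : (f ^ k) x = 0) (hk : k ≤ m) :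
    (f ^ m) x = 0 := by
  obtain ⟨c, rfl⟩ : ∃ c, m = c + k := ⟨m - k, by omega⟩
  rw [pow_add, Module.End.mul_apply, h, map_zero]

omit [CharZero K] [IsDomain A] in
/-- vanishing form of the twisted Leibniz rule (sharp) -/
theorem T_pow_mul_eq_zero (d : Derivation K A A) (lam mu : K) :
    ∀ (n s t : ℕ) (x y : A), 1 ≤ s → 1 ≤ t → s + t ≤ n + 1 →
      ((T d lam) ^ s) x = 0 → ((T d mu) ^ t) y = 0 →
      ((T d (lam + mu)) ^ n) (x * y) = 0 := by
  intro n
  induction n with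
  | zero =>
    intro s t x y hs ht hst hx hy
    omega
  | succ n IH =>
    intro s t x y hs ht hst hx hy
    rw [pow_succ_apply, T_mul, map_add]
    have e1 : ((T d (lam + mu)) ^ n) (x * (T d mu) y) = 0 := by
      rcases Nat.lt_or_ge t 2 with ht2 | ht2
      · obtain rfl : t = 1 := by omega
        simp only [pow_one] at hy
        rw [hy, mul_zero, map_zero]
      · have ht3 : t - 1 + 1 = t := by omega
        exact IH s (t-1) x ((T d mu) y) hs (by omega) (by omega)
          hx (by rw [← pow_succ_apply, ht3]; exact hy)
    have e2 : ((T d (lam + mu)) ^ n) (y * (T d lam) x) = 0 := by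
      rcases Nat.lt_or_ge s 2 with hs2 | hs2
      · obtain rfl : s = 1 := by omega
        simp only [pow_one] at hx
        rw [hx, mul_zero, map_zero]
      · rw [mul_comm]
        have hs3 : s - 1 + 1 = s := by omega
        exact IH (s-1) t ((T d lam) x) y (by omega) ht (by omega)
          (by rw [← pow_succ_apply, hs3]; exact hx) hy
    have hTapp : (T d (lam+mu)) (x*y) = x * (T d mu) y + y * (T d lam) x := T_mul d lam mu x y
    rw [e1, e2, add_zero]

omit [CharZero K] [IsDomain A] in
lemma dpow_succ_apply (d : Derivation K A A) (n : ℕ) (z : A) :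
    (d.toLinearMap ^ (n+1)) z = (d.toLinearMap ^ n) (d z) := by
  rw [pow_succ, Module.End.mul_apply]; rfl

omit [CharZero K] [IsDomain A] in
/-- the leading-term form of the Leibniz rule -/
theorem pow_mul_leading (d : Derivation K A A) :
    ∀ (n s t : ℕ) (x y : A), s + t = n →
      (d.toLinearMap ^ (s+1)) x = 0 → (d.toLinearMap ^ (t+1)) y = 0 →
      (d.toLinearMap ^ n) (x * y) =
        n.choose s • ((d.toLinearMap ^ s) x * (d.toLinearMap ^ t) y) := by
  intro n
  induction n with
  | zero =>
    intro s t x y hst hx hy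
    obtain ⟨hs, ht⟩ : s = 0 ∧ t = 0 := by omega
    simp [hs, ht]
  | succ n IH =>
    intro s t x y hst hx hy
    have hdxy : d (x * y) = x * d y + y * d x := by
      have := Derivation.leibniz d x y
      simpa [smul_eq_mul] using this
    rcases Nat.eq_zero_or_pos s with hs | hs
    · subst hs
      obtain rfl : t = n + 1 := by omega
      have hdx : d x = 0 := by simpa using hx
      rw [dpow_succ_apply, hdxy, hdx, mul_zero, add_zero]
      rw [IH 0 n x (d y) (by omega) hx (by rw [← dpow_succ_apply]; exact hy)]
      simp only [pow_zero, Module.End.one_apply, Nat.choose_zero_right, one_smul]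
      rw [← dpow_succ_apply]
    rcases Nat.eq_zero_or_pos t with ht | ht
    · subst ht
      obtain rfl : s = n + 1 := by omega
      have hdy : d y = 0 := by simpa using hy
      rw [dpow_succ_apply, hdxy, hdy, mul_zero, zero_add, mul_comm y (d x)]
      rw [IH n 0 (d x) y (by omega) (by rw [← dpow_succ_apply]; exact hx) hy]
      simp only [pow_zero, Module.End.one_apply, Nat.choose_self, one_smul]
      rw [← dpow_succ_apply]
    obtain ⟨s', rfl⟩ : ∃ s', s = s' + 1 := ⟨s - 1, by omega⟩
    obtain ⟨t', rfl⟩ : ∃ t', t = t' + 1 := ⟨t - 1, by omega⟩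
    rw [dpow_succ_apply, hdxy, map_add]
    rw [IH (s'+1) t' x (d y) (by omega) hx (by rw [← dpow_succ_apply]; exact hy)]
    rw [mul_comm y (d x)]
    rw [IH s' (t'+1) (d x) y (by omega) (by rw [← dpow_succ_apply]; exact hx) hy]
    rw [← dpow_succ_apply d t' y, ← dpow_succ_apply d s' x, ← add_nsmul]
    congr 1
    have h1 := Nat.choose_succ_succ n s'
    simp only [Nat.succ_eq_add_one] at h1
    omega

omit [CharZero K] [IsDomain A] in
lemma lnd_ex {d : Derivation K A A} (hd : IsLND d) (x : A) :
    ∃ n, (d.toLinearMap ^ n) x = 0 :=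
  (hd x).imp fun _ h => h.2

/-- degree of `x` with respect to a locally nilpotent derivation -/
noncomputable def ndeg (d : Derivation K A A) (x : A) : ℕ :=
  if h : ∃ n, (d.toLinearMap ^ n) x = 0 then Nat.find h - 1 else 0

section NdegBasic

variable {d : Derivation K A A} {x y : A}

omit [CharZero K] [IsDomain A] in
lemma find_pos (h : ∃ n, (d.toLinearMap ^ n) x = 0) (hx : x ≠ 0) : 0 < Nat.find h := by
  rcases Nat.eq_zero_or_pos (Nat.find h) with h0 | h0
  · exfalso
    have := Nat.find_spec h
    rw [h0] at this
    simp only [pow_zero, Module.End.one_apply] at this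
    exact hx this
  · exact h0

omit [CharZero K] [IsDomain A] in
lemma ndeg_eq (h : ∃ n, (d.toLinearMap ^ n) x = 0) : ndeg d x = Nat.find h - 1 := by
  rw [ndeg, dif_pos h]

omit [CharZero K] [IsDomain A] in
lemma ndeg_spec1 (h : ∃ n, (d.toLinearMap ^ n) x = 0) (hx : x ≠ 0) :
    (d.toLinearMap ^ (ndeg d x + 1)) x = 0 := by
  rw [ndeg_eq h]
  have := find_pos h hx
  have h2 : Nat.find h - 1 + 1 = Nat.find h := by omega
  rw [h2]
  exact Nat.find_spec h

omit [CharZero K] [IsDomain A] in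
lemma ndeg_spec2 (h : ∃ n, (d.toLinearMap ^ n) x = 0) (hx : x ≠ 0) :
    (d.toLinearMap ^ (ndeg d x)) x ≠ 0 := by
  rw [ndeg_eq h]
  have := find_pos h hx
  exact Nat.find_min h (by omega)

omit [CharZero K] [IsDomain A] in
lemma van_mono (h : ∃ n, (d.toLinearMap ^ n) x = 0) (hx : x ≠ 0) :
    ∀ m, ndeg d x + 1 ≤ m → (d.toLinearMap ^ m) x = 0 := by
  intro m hm
  obtain ⟨c, rfl⟩ : ∃ c, m = c + (ndeg d x + 1) := ⟨m - (ndeg d x + 1), by omega⟩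
  rw [pow_add, Module.End.mul_apply, ndeg_spec1 h hx, map_zero]

omit [CharZero K] [IsDomain A] in
lemma ndeg_le_of {n : ℕ} (hv : (d.toLinearMap ^ (n+1)) x = 0) : ndeg d x ≤ n := by
  have h : ∃ m, (d.toLinearMap ^ m) x = 0 := ⟨n+1, hv⟩
  rw [ndeg_eq h]
  have := Nat.find_min' h hv
  omega

omit [CharZero K] [IsDomain A] in
lemma le_ndeg_of {m : ℕ} (h : ∃ n, (d.toLinearMap ^ n) x = 0) (hx : x ≠ 0)
    (hnv : (d.toLinearMap ^ m) x ≠ 0) : m ≤ ndeg d x := by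
  by_contra hc
  exact hnv (van_mono h hx m (by omega))

omit [CharZero K] [IsDomain A] in
lemma ndeg_zero_iff (h : ∃ n, (d.toLinearMap ^ n) x = 0) (hx : x ≠ 0) :
    ndeg d x = 0 ↔ d x = 0 := by
  constructor
  · intro h0
    have := ndeg_spec1 h hx
    rw [h0] at this
    simpa using this
  · intro h0
    have : (d.toLinearMap ^ (0+1)) x = 0 := by simpa using h0
    have := ndeg_le_of this
    omega

lemma ndeg_mul (hd : IsLND d) (hx : x ≠ 0) (hy : y ≠ 0) :
    ndeg d (x * y) = ndeg d x + ndeg d y := by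
  haveI : CharZero A := charZeroA K A
  have hxy : x * y ≠ 0 := mul_ne_zero hx hy
  have hex := lnd_ex hd x
  have hey := lnd_ex hd y
  have hexy := lnd_ex hd (x * y)
  have hlead := pow_mul_leading d (ndeg d x + ndeg d y) (ndeg d x) (ndeg d y) x y rfl
    (ndeg_spec1 hex hx) (ndeg_spec1 hey hy)
  have hne : (d.toLinearMap ^ (ndeg d x + ndeg d y)) (x * y) ≠ 0 := by
    rw [hlead]
    have hcne : ((ndeg d x + ndeg d y).choose (ndeg d x) : A) ≠ 0 := by
      rw [Nat.cast_ne_zero]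
      exact Nat.choose_pos (by omega) |>.ne'
    rw [nsmul_eq_mul]
    exact mul_ne_zero hcne (mul_ne_zero (ndeg_spec2 hex hx) (ndeg_spec2 hey hy))
  have hub : ndeg d (x * y) ≤ ndeg d x + ndeg d y := by
    apply ndeg_le_of
    have := T_pow_mul_eq_zero d 0 0 (ndeg d x + ndeg d y + 1) (ndeg d x + 1) (ndeg d y + 1) x y
      (by omega) (by omega) (by omega)
    rw [add_zero, T_zero] at this
    exact this (ndeg_spec1 hex hx) (ndeg_spec1 hey hy)
  have hlb := le_ndeg_of hexy hxy hne
  omega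

lemma fact_closed (hd : IsLND d) (hxy : x * y ≠ 0) (h0 : d (x * y) = 0) :
    d x = 0 ∧ d y = 0 := by
  have hx : x ≠ 0 := fun h => hxy (by rw [h, zero_mul])
  have hy : y ≠ 0 := fun h => hxy (by rw [h, mul_zero])
  have h1 : ndeg d (x * y) = 0 := (ndeg_zero_iff (lnd_ex hd _) hxy).mpr h0
  rw [ndeg_mul hd hx hy] at h1
  exact ⟨(ndeg_zero_iff (lnd_ex hd x) hx).mp (by omega),
    (ndeg_zero_iff (lnd_ex hd y) hy).mp (by omega)⟩

end NdegBasic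

section LayerTwo

variable {d₁ d₂ : Derivation K A A}

omit [CharZero K] [IsDomain A] in
lemma dpow_succ_apply' (d : Derivation K A A) (n : ℕ) (z : A) :
    (d.toLinearMap ^ (n+1)) z = d ((d.toLinearMap ^ n) z) := by
  rw [pow_succ', Module.End.mul_apply]; rfl

omit [CharZero K] [IsDomain A] in
lemma d_pow_ker (d : Derivation K A A) {z : A} (hz : d z = 0) (n : ℕ) : d (z ^ n) = 0 := by
  rw [Derivation.leibniz_pow, hz, smul_zero, smul_zero]

omit [CharZero K] [IsDomain A] in
lemma d_mul_ker (d : Derivation K A A) {z w : A} (hz : d z = 0) (hw : d w = 0) :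
    d (z * w) = 0 := by
  rw [Derivation.leibniz, hz, hw, smul_zero, smul_zero, add_zero]

omit [IsDomain A] in
lemma inv_nsmul_cancel (j : ℕ) (z : A) : ((j + 1 : K))⁻¹ • ((j + 1 : ℕ) • z) = z := by
  rw [← Nat.cast_smul_eq_nsmul K, smul_smul]
  push_cast
  rw [inv_mul_cancel₀ (Nat.cast_add_one_ne_zero j), one_smul]

omit [CharZero K] [IsDomain A] in
lemma dpoly_term {r u : A} (hru : d₂ r = u) {cj : A} (hcj : d₂ cj = 0) (j : ℕ) :
    d₂ (cj * r ^ (j+1)) = ((j+1 : ℕ) • (cj * r ^ j)) * u := by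
  rw [Derivation.leibniz, Derivation.leibniz_pow, hru, hcj, smul_zero, add_zero]
  simp only [smul_eq_mul, Nat.add_sub_cancel]
  rw [mul_smul_comm, smul_mul_assoc]
  ring_nf

omit [IsDomain A] in
lemma dpoly_term' {r u : A} (hru : d₂ r = u) {cj : A} (hcj : d₂ cj = 0) (j : ℕ) :
    d₂ ((((j + 1 : K))⁻¹ • cj) * r ^ (j+1)) = (cj * r ^ j) * u := by
  have h1 : d₂ (((j + 1 : K))⁻¹ • cj) = 0 := by rw [Derivation.map_smul, hcj, smul_zero]
  rw [dpoly_term hru h1 j]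
  rw [smul_mul_assoc, smul_mul_assoc, smul_mul_assoc,
    smul_comm ((j+1:ℕ)) (((j+1:K))⁻¹), inv_nsmul_cancel]

/-- Rentschler-type representation lemma -/
theorem repR (h₂ : IsLND d₂) {r u : A} (hru : d₂ r = u) (hu : d₂ u = 0) (x : A) :
    ∃ (N J : ℕ) (c : ℕ → A), (∀ j, d₂ (c j) = 0) ∧
      u ^ N * x = ∑ j ∈ Finset.range (J+1), c j * r ^ j := by
  by_cases hx0 : x = 0
  · exact ⟨0, 0, fun _ => 0, fun _ => map_zero _, by simp [hx0]⟩
  have hgen : ∀ (n : ℕ) (x : A), x ≠ 0 → ndeg d₂ x = n →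
      ∃ (N J : ℕ) (c : ℕ → A), (∀ j, d₂ (c j) = 0) ∧
        u ^ N * x = ∑ j ∈ Finset.range (J+1), c j * r ^ j := by
    intro n
    induction n using Nat.strong_induction_on with
    | _ n IH =>
      intro x hx0 hn
      by_cases hdx : d₂ x = 0
      · exact ⟨0, 0, fun _ => x, fun _ => hdx, by simp⟩
      · have hex := lnd_ex h₂ x
        have hn1 : 1 ≤ n := by
          rcases Nat.eq_zero_or_pos n with h0 | h0
          · exfalso; exact hdx ((ndeg_zero_iff hex hx0).mp (by omega))
          · exact h0
        have hdxne : d₂ x ≠ 0 := hdx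
        have hdeglt : ndeg d₂ (d₂ x) < n := by
          have hv : (d₂.toLinearMap ^ ((n-1)+1)) (d₂ x) = 0 := by
            rw [← dpow_succ_apply]
            have : n - 1 + 1 + 1 = n + 1 := by omega
            rw [this, ← hn]
            exact ndeg_spec1 hex hx0
          have := ndeg_le_of hv
          omega
        obtain ⟨N', J', c', hc', heq⟩ := IH _ hdeglt (d₂ x) hdxne rfl
        set W : A := ∑ j ∈ Finset.range (J'+1), (((j + 1 : K))⁻¹ • c' j) * r ^ (j+1) with hW
        have hdW : d₂ W = (∑ j ∈ Finset.range (J'+1), c' j * r ^ j) * u := by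
          rw [hW, map_sum, Finset.sum_mul]
          exact Finset.sum_congr rfl fun j hj => dpoly_term' hru (hc' j) j
        set b₀ : A := u ^ (N'+1) * x - W with hb₀
        have hdb₀ : d₂ b₀ = 0 := by
          rw [hb₀, map_sub, hdW]
          rw [d₂.leibniz (u ^ (N'+1)) x, d_pow_ker d₂ hu, smul_zero, add_zero]
          rw [smul_eq_mul, ← heq]
          ring
        refine ⟨N'+1, J'+1,
          fun j => Nat.casesOn j b₀ (fun j' => ((j' + 1 : K))⁻¹ • c' j'),
          fun j => ?_, ?_⟩
        · cases j with
          | zero => exact hdb₀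
          | succ j' =>
            show d₂ (((j' + 1 : K))⁻¹ • c' j') = 0
            rw [Derivation.map_smul, hc', smul_zero]
        · rw [Finset.sum_range_succ' _ (J'+1)]
          show u ^ (N'+1) * x =
            (∑ j ∈ Finset.range (J'+1), (((j + 1 : K))⁻¹ • c' j) * r ^ (j+1)) + b₀ * r ^ 0
          rw [← hW, hb₀, pow_zero, mul_one]
          ring
  exact hgen (ndeg d₂ x) x hx0 rfl

/-- independence over the kernel -/
theorem repS (h₂ : IsLND d₂) {r u : A} (hru : d₂ r = u) (hune : u ≠ 0) :
    ∀ (J : ℕ) (c : ℕ → A), (∀ j, d₂ (c j) = 0) →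
      (∑ j ∈ Finset.range (J+1), c j * r ^ j) = 0 → ∀ j < J+1, c j = 0 := by
  haveI : CharZero A := charZeroA K A
  intro J
  induction J with
  | zero =>
    intro c hc hsum j hj
    obtain rfl : j = 0 := by omega
    simpa using hsum
  | succ J IH =>
    intro c hc hsum
    have hder : (∑ j ∈ Finset.range (J+1), ((j+1 : ℕ) • (c (j+1) * r ^ j))) * u = 0 := by
      have h0 : d₂ (∑ j ∈ Finset.range (J+1+1), c j * r ^ j) = 0 := by rw [hsum, map_zero]
      rw [Finset.sum_range_succ' _ (J+1)] at h0
      simp only [pow_zero, mul_one] at h0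
      rw [map_add, hc 0, add_zero, map_sum] at h0
      have hterm : ∀ j ∈ Finset.range (J+1),
          d₂ (c (j+1) * r ^ (j+1)) = ((j+1 : ℕ) • (c (j+1) * r ^ j)) * u := by
        intro j hj
        exact dpoly_term hru (hc (j+1)) j
      rw [Finset.sum_congr rfl hterm, ← Finset.sum_mul] at h0
      exact h0
    have hz : (∑ j ∈ Finset.range (J+1), ((j+1 : ℕ) • (c (j+1) * r ^ j))) = 0 := by
      rcases mul_eq_zero.mp hder with h | h
      · exact h
      · exact absurd h hune
    have hz2 : (∑ j ∈ Finset.range (J+1), ((j+1 : ℕ) • c (j+1)) * r ^ j) = 0 := by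
      rw [← hz]
      exact Finset.sum_congr rfl fun j hj => (smul_mul_assoc _ _ _)
    have hcomp := IH (fun j => (j+1 : ℕ) • c (j+1))
      (fun j => by rw [map_nsmul, hc, smul_zero]) hz2
    have hc1 : ∀ j, 1 ≤ j → j < J+2 → c j = 0 := by
      intro j h1 h2
      have h3 : (j - 1 + 1 : ℕ) • c (j - 1 + 1) = 0 := hcomp (j-1) (by omega)
      have hj1 : j - 1 + 1 = j := by omega
      rw [hj1] at h3
      have hnne : (j : A) ≠ 0 := Nat.cast_ne_zero.mpr (by omega)
      rw [nsmul_eq_mul] at h3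
      rcases mul_eq_zero.mp h3 with h | h
      · exact absurd h hnne
      · exact h
    intro j hj
    rcases Nat.eq_zero_or_pos j with rfl | hjpos
    · rw [Finset.sum_range_succ' _ (J+1)] at hsum
      have : ∀ j ∈ Finset.range (J+1), c (j+1) * r ^ (j+1) = 0 := by
        intro j hj2
        rw [Finset.mem_range] at hj2
        rw [hc1 (j+1) (by omega) (by omega), zero_mul]
      rw [Finset.sum_congr rfl this, Finset.sum_const_zero, zero_add, pow_zero, mul_one] at hsum
      exact hsum
    · exact hc1 j hjpos hj

/-- If the kernel of `d₂` is contained in that of `d₁` but some kernel element of `d₁`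
is not in the kernel of `d₂`, then `d₁ = 0`. -/
theorem ker_not_sub (h₂ : IsLND d₂)
    (hBsub : ∀ z, d₂ z = 0 → d₁ z = 0) {a : A} (ha1 : d₁ a = 0) (ha2 : d₂ a ≠ 0) :
    d₁ = 0 := by
  have ha0 : a ≠ 0 := fun h => ha2 (by rw [h, map_zero])
  have hex := lnd_ex h₂ a
  set m : ℕ := ndeg d₂ a with hm
  have hm1 : 1 ≤ m := by
    by_contra hcon
    have h0 : ndeg d₂ a = 0 := by omega
    exact ha2 ((ndeg_zero_iff hex ha0).mp h0)
  set r : A := (d₂.toLinearMap ^ (m-1)) a with hr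
  set u : A := (d₂.toLinearMap ^ m) a with hu'
  have hru : d₂ r = u := by
    rw [hr, hu', ← dpow_succ_apply' d₂ (m-1) a]
    have h1 : m - 1 + 1 = m := by omega
    rw [h1]
  have hu : d₂ u = 0 := by
    rw [hu', ← dpow_succ_apply' d₂ m a]
    exact ndeg_spec1 hex ha0
  have hune : u ≠ 0 := by
    rw [hu']
    exact ndeg_spec2 hex ha0
  have hd1u : d₁ u = 0 := hBsub u hu
  -- representation of a
  obtain ⟨N, J, c, hc, heq⟩ := repR h₂ hru hu a
  have hd1c : ∀ j, d₁ (c j) = 0 := fun j => hBsub _ (hc j)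
  -- not all coefficients with j ≥ 1 vanish
  have hnotall : ∃ j₀, 1 ≤ j₀ ∧ j₀ < J + 1 ∧ c j₀ ≠ 0 := by
    by_contra hall
    push_neg at hall
    have hsum0 : u ^ N * a = c 0 := by
      rw [heq, Finset.sum_range_succ' _ J]
      have : ∀ j ∈ Finset.range J, c (j+1) * r ^ (j+1) = 0 := by
        intro j hj
        rw [Finset.mem_range] at hj
        rw [hall (j+1) (by omega) (by omega), zero_mul]
      rw [Finset.sum_congr rfl this, Finset.sum_const_zero, zero_add, pow_zero, mul_one]
    have hprod : d₂ (u ^ N * a) = 0 := by rw [hsum0]; exact hc 0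
    have hne : u ^ N * a ≠ 0 := mul_ne_zero (pow_ne_zero _ hune) ha0
    exact ha2 (fact_closed h₂ hne hprod).2
  obtain ⟨j₀, hj₀1, hj₀2, hj₀3⟩ := hnotall
  -- d₁ r = 0
  have hd1r : d₁ r = 0 := by
    by_contra hd1rne
    have h0 : d₁ (u ^ N * a) = 0 := d_mul_ker d₁ (d_pow_ker d₁ hd1u N) ha1
    rw [heq, map_sum] at h0
    have hterm : ∀ j ∈ Finset.range (J+1),
        d₁ (c j * r ^ j) = (j • (c j * r ^ (j-1))) * d₁ r := by
      intro j hj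
      cases j with
      | zero =>
        simp only [pow_zero, mul_one, zero_smul, zero_mul]
        exact hd1c 0
      | succ j' =>
        have := dpoly_term (d₂ := d₁) (r := r) (u := d₁ r) rfl (hd1c (j'+1)) j'
        simpa using this
    rw [Finset.sum_congr rfl hterm, ← Finset.sum_mul] at h0
    rcases mul_eq_zero.mp h0 with h | h
    swap
    · exact hd1rne h
    -- now the coefficient sum vanishes; contradict hj₀3 via repS
    rw [Finset.sum_range_succ' _ J] at h
    simp only [zero_smul, zero_mul, add_zero] at h
    obtain ⟨J', rfl⟩ : ∃ J', J = J' + 1 := ⟨J - 1, by omega⟩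
    have hz2 : (∑ j ∈ Finset.range (J'+1), ((j+1 : ℕ) • c (j+1)) * r ^ j) = 0 := by
      rw [← h]
      refine Finset.sum_congr rfl fun j hj => ?_
      rw [Nat.add_sub_cancel, smul_mul_assoc]
    have hthis : ((j₀ - 1) + 1 : ℕ) • c ((j₀ - 1) + 1) = 0 :=
      repS h₂ hru hune J' (fun j => (j+1 : ℕ) • c (j+1))
        (fun j => by rw [map_nsmul, hc, smul_zero]) hz2 (j₀ - 1) (by omega)
    have hj1 : j₀ - 1 + 1 = j₀ := by omega
    rw [hj1, nsmul_eq_mul] at hthis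
    haveI : CharZero A := charZeroA K A
    rcases mul_eq_zero.mp hthis with h' | h'
    · exact absurd h' (Nat.cast_ne_zero.mpr (by omega))
    · exact hj₀3 h'
  -- every x is in the kernel of d₁
  have hall : ∀ x : A, d₁ x = 0 := by
    intro x
    obtain ⟨N, J, c, hc, heq⟩ := repR h₂ hru hu x
    have h0 : d₁ (u ^ N * x) = u ^ N * d₁ x := by
      rw [Derivation.leibniz, d_pow_ker d₁ hd1u, smul_zero, add_zero, smul_eq_mul]
    have h1 : d₁ (∑ j ∈ Finset.range (J+1), c j * r ^ j) = 0 := by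
      rw [map_sum]
      refine Finset.sum_eq_zero fun j hj => ?_
      rw [Derivation.leibniz, hBsub _ (hc j), d_pow_ker d₁ hd1r, smul_zero, smul_zero, add_zero]
    rw [← heq, h0] at h1
    rcases mul_eq_zero.mp h1 with h | h
    · exact absurd h (pow_ne_zero _ hune)
    · exact h
  ext z
  exact hall z

end LayerTwo

section LayerThree

variable (del : Derivation K A A)

/-- generalized eigenspace of a derivation -/
noncomputable def ES (lam : K) : Submodule K A :=
  Module.End.maxGenEigenspace del.toLinearMap lam

omit [CharZero K] [IsDomain A] in
lemma mem_ES_iff (lam : K) (x : A) : x ∈ ES del lam ↔ ∃ k, ((T del lam) ^ k) x = 0 :=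
  Module.End.mem_maxGenEigenspace _ _ _

variable {del}

omit [CharZero K] [IsDomain A] in
lemma ES_mul {lam mu : K} {x y : A} (hx : x ∈ ES del lam) (hy : y ∈ ES del mu) :
    x * y ∈ ES del (lam + mu) := by
  rw [mem_ES_iff] at hx hy ⊢
  obtain ⟨k₁, hk₁⟩ := hx
  obtain ⟨k₂, hk₂⟩ := hy
  refine ⟨k₁ + k₂ + 1, ?_⟩
  exact T_pow_mul_eq_zero del lam mu (k₁+k₂+1) (k₁+1) (k₂+1) x y (by omega) (by omega)
    (by omega) (end_pow_van hk₁ (by omega)) (end_pow_van hk₂ (by omega))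

omit [CharZero K] [IsDomain A] in
lemma ES_T_inv {lam : K} {x : A} (hx : x ∈ ES del lam) : T del lam x ∈ ES del lam := by
  rw [mem_ES_iff] at hx ⊢
  obtain ⟨k, hk⟩ := hx
  exact ⟨k, by rw [← pow_succ_apply]; exact end_pow_van hk (by omega)⟩

omit [CharZero K] [IsDomain A] in
lemma ES_one : (1 : A) ∈ ES del 0 := by
  rw [mem_ES_iff]
  exact ⟨1, by simp [T_zero]⟩

omit [CharZero K] [IsDomain A] in
/-- totality of generalized eigenspaces for a locally finite derivation -/
theorem ES_total [IsAlgClosed K] (hLF : IsLocFin del) (x : A) : x ∈ ⨆ lam, ES del lam := by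
  obtain ⟨V, hxV, hfd, hinv⟩ := hLF x
  have hinv' : ∀ v ∈ V, del.toLinearMap v ∈ V := hinv
  set EV : Module.End K V := LinearMap.restrict del.toLinearMap hinv' with hEV
  haveI := hfd
  have htop : ⨆ mu, EV.maxGenEigenspace mu = ⊤ := Module.End.iSup_maxGenEigenspace_eq_top EV
  have hx' : (⟨x, hxV⟩ : V) ∈ (⊤ : Submodule K V) := Submodule.mem_top
  rw [← htop] at hx'
  have hmap : x ∈ Submodule.map V.subtype (⨆ mu, EV.maxGenEigenspace mu) :=
    ⟨⟨x, hxV⟩, hx', rfl⟩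
  rw [Submodule.map_iSup] at hmap
  refine (iSup_le_iff.mpr ?_ : (⨆ mu, Submodule.map V.subtype (EV.maxGenEigenspace mu)) ≤ _) hmap
  intro mu y hy
  obtain ⟨v, hv, rfl⟩ := hy
  apply Submodule.mem_iSup_of_mem mu
  rw [SetLike.mem_coe, Module.End.mem_maxGenEigenspace] at hv
  obtain ⟨k, hk⟩ := hv
  rw [mem_ES_iff]
  refine ⟨k, ?_⟩
  have hcomm : ∀ (k : ℕ) (w : V), ((T del mu) ^ k) (w : A) = (((EV - mu • 1) ^ k) w : A) := by
    intro k
    induction k with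
    | zero => intro w; rfl
    | succ k IHk =>
      intro w
      rw [pow_succ, pow_succ, Module.End.mul_apply, Module.End.mul_apply]
      have h1 : T del mu (w : A) = ((EV - mu • 1) w : A) := by
        show del (w : A) - mu • (w : A) = (((EV - mu • 1) w : V) : A)
        have h2 : ((EV - mu • 1) w : V) = EV w - mu • w := rfl
        rw [h2, AddSubgroupClass.coe_sub, SetLike.val_smul]
        rfl
      rw [h1, IHk ((EV - mu • 1) w)]
  have hc := hcomm k v
  rw [hk] at hc
  simpa [Submodule.coe_subtype] using hc

omit [CharZero K] [IsDomain A] in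
/-- components of a sum over distinct generalized eigenspaces vanishing -/
theorem zero_sum (s : Finset K) (F : K → A) (hF : ∀ lam, F lam ∈ ES del lam)
    (h0 : ∑ lam ∈ s, F lam = 0) : ∀ lam ∈ s, F lam = 0 := by
  have hInd : iSupIndep (fun lam => ES del lam) :=
    Module.End.independent_maxGenEigenspace del.toLinearMap
  have hinj := hInd.dfinsupp_lsum_injective
  set v : Π₀ lam : K, (ES del lam) :=
    ∑ lam ∈ s, DFinsupp.single lam (⟨F lam, hF lam⟩ : ES del lam) with hv
  have hlsum : DFinsupp.lsum ℕ (fun lam => (ES del lam).subtype) v = 0 := by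
    rw [hv, map_sum]
    simp only [DFinsupp.lsum_single, Submodule.coe_subtype]
    exact h0
  have hv0 : v = 0 := hinj (by rw [hlsum]; exact (map_zero _).symm)
  intro lam hlam
  have hvl : v lam = ⟨F lam, hF lam⟩ := by
    rw [hv, DFinsupp.finset_sum_apply]
    rw [Finset.sum_eq_single lam]
    · exact DFinsupp.single_eq_same
    · intro b hb hne
      exact DFinsupp.single_eq_of_ne (Ne.symm hne)
    · intro h; exact absurd hlam h
  rw [hv0] at hvl
  have := congrArg (Subtype.val) hvl.symm
  simpa using this

section Decomp

variable [IsAlgClosed K] (hLF : IsLocFin del)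

/-- decomposition of an element into generalized eigencomponents -/
noncomputable def dcomp (x : A) : K →₀ A :=
  ((Submodule.mem_iSup_iff_exists_finsupp (fun lam => ES del lam) x).mp
    (ES_total hLF x)).choose

omit [CharZero K] [IsDomain A] in
lemma dcomp_mem (x : A) (lam : K) : dcomp hLF x lam ∈ ES del lam :=
  ((Submodule.mem_iSup_iff_exists_finsupp (fun lam => ES del lam) x).mp
    (ES_total hLF x)).choose_spec.1 lam

omit [CharZero K] [IsDomain A] in
lemma dcomp_sum (x : A) : ∑ lam ∈ (dcomp hLF x).support, dcomp hLF x lam = x :=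
  ((Submodule.mem_iSup_iff_exists_finsupp (fun lam => ES del lam) x).mp
    (ES_total hLF x)).choose_spec.2

omit [CharZero K] [IsDomain A] in
/-- uniqueness: any representation computes the canonical components -/
theorem rep_eval {x : A} {s : Finset K} {F : K → A} (hmem : ∀ lam, F lam ∈ ES del lam)
    (hzero : ∀ lam ∉ s, F lam = 0) (hsum : ∑ lam ∈ s, F lam = x) :
    ∀ lam, dcomp hLF x lam = F lam := by
  set t : Finset K := s ∪ (dcomp hLF x).support with ht
  have hsub1 : (dcomp hLF x).support ⊆ t := Finset.subset_union_right
  have hsub2 : s ⊆ t := Finset.subset_union_left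
  have hsum1 : ∑ lam ∈ t, dcomp hLF x lam = x :=
    (Finset.sum_subset hsub1 (fun lam _ h => Finsupp.notMem_support_iff.mp h)).symm.trans
      (dcomp_sum hLF x)
  have hsum2 : ∑ lam ∈ t, F lam = x :=
    (Finset.sum_subset hsub2 (fun lam _ h => hzero lam h)).symm.trans hsum
  have hG : ∀ lam ∈ t, dcomp hLF x lam - F lam = 0 := by
    apply zero_sum t (fun lam => dcomp hLF x lam - F lam)
      (fun lam => sub_mem (dcomp_mem hLF x lam) (hmem lam))
    rw [Finset.sum_sub_distrib, hsum1, hsum2, sub_self]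
  intro lam
  by_cases hl : lam ∈ t
  · exact sub_eq_zero.mp (hG lam hl)
  · have h1 : dcomp hLF x lam = 0 := Finsupp.notMem_support_iff.mp (fun h => hl (hsub1 h))
    have h2 : F lam = 0 := hzero lam (fun h => hl (hsub2 h))
    rw [h1, h2]

/-- the semisimple part, as a raw function -/
noncomputable def sigmaRaw (x : A) : A :=
  ∑ lam ∈ (dcomp hLF x).support, lam • dcomp hLF x lam

omit [CharZero K] [IsDomain A] in
lemma dcomp_sigma (x : A) (lam : K) :
    dcomp hLF (sigmaRaw hLF x) lam = lam • dcomp hLF x lam := by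
  refine rep_eval hLF (s := (dcomp hLF x).support)
    (F := fun mu => mu • dcomp hLF x mu) (fun mu => ?_) (fun mu hmu => ?_) rfl lam
  · exact Submodule.smul_mem _ _ (dcomp_mem hLF x mu)
  · show mu • dcomp hLF x mu = 0
    rw [Finsupp.notMem_support_iff.mp hmu, smul_zero]

omit [CharZero K] [IsDomain A] in
lemma sigma_sum_over {x : A} {t : Finset K} (hsub : (dcomp hLF x).support ⊆ t) :
    sigmaRaw hLF x = ∑ lam ∈ t, lam • dcomp hLF x lam := by
  refine Finset.sum_subset hsub (fun lam _ h => ?_)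
  rw [Finsupp.notMem_support_iff.mp h, smul_zero]

omit [CharZero K] [IsDomain A] in
lemma sum_over_of_supset {x : A} {t : Finset K} (hsub : (dcomp hLF x).support ⊆ t) :
    ∑ lam ∈ t, dcomp hLF x lam = x := by
  rw [← Finset.sum_subset hsub (fun lam _ h => Finsupp.notMem_support_iff.mp h)]
  exact dcomp_sum hLF x

omit [CharZero K] [IsDomain A] in
lemma dcomp_add (x y : A) (lam : K) :
    dcomp hLF (x + y) lam = dcomp hLF x lam + dcomp hLF y lam := by
  classical
  set t : Finset K := (dcomp hLF x).support ∪ (dcomp hLF y).support with ht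
  refine rep_eval hLF (s := t)
    (F := fun mu => dcomp hLF x mu + dcomp hLF y mu) (fun mu => ?_) (fun mu hmu => ?_) ?_ lam
  · exact add_mem (dcomp_mem hLF x mu) (dcomp_mem hLF y mu)
  · rw [ht, Finset.mem_union] at hmu
    push_neg at hmu
    show dcomp hLF x mu + dcomp hLF y mu = 0
    rw [Finsupp.notMem_support_iff.mp hmu.1, Finsupp.notMem_support_iff.mp hmu.2, add_zero]
  · rw [Finset.sum_add_distrib,
      sum_over_of_supset hLF (ht ▸ Finset.subset_union_left),
      sum_over_of_supset hLF (ht ▸ Finset.subset_union_right)]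

omit [CharZero K] [IsDomain A] in
lemma dcomp_ksmul (c : K) (x : A) (lam : K) :
    dcomp hLF (c • x) lam = c • dcomp hLF x lam := by
  refine rep_eval hLF (s := (dcomp hLF x).support)
    (F := fun mu => c • dcomp hLF x mu) (fun mu => ?_) (fun mu hmu => ?_) ?_ lam
  · exact Submodule.smul_mem _ _ (dcomp_mem hLF x mu)
  · show c • dcomp hLF x mu = 0
    rw [Finsupp.notMem_support_iff.mp hmu, smul_zero]
  · rw [← Finset.smul_sum, dcomp_sum hLF x]

omit [CharZero K] [IsDomain A] in
lemma dcomp_support_subset_add (x y : A) :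
    (dcomp hLF (x + y)).support ⊆ (dcomp hLF x).support ∪ (dcomp hLF y).support := by
  intro lam hl
  rw [Finsupp.mem_support_iff] at hl
  rw [dcomp_add hLF x y lam] at hl
  by_contra hc
  rw [Finset.mem_union] at hc
  push_neg at hc
  rw [Finsupp.notMem_support_iff.mp hc.1, Finsupp.notMem_support_iff.mp hc.2, add_zero] at hl
  exact hl rfl

omit [CharZero K] [IsDomain A] in
lemma sigma_add (x y : A) : sigmaRaw hLF (x + y) = sigmaRaw hLF x + sigmaRaw hLF y := by
  classical
  set t : Finset K := ((dcomp hLF x).support ∪ (dcomp hLF y).support) with ht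
  rw [sigma_sum_over hLF (t := t) (dcomp_support_subset_add hLF x y),
    sigma_sum_over hLF (t := t) (ht ▸ Finset.subset_union_left),
    sigma_sum_over hLF (t := t) (ht ▸ Finset.subset_union_right),
    ← Finset.sum_add_distrib]
  refine Finset.sum_congr rfl fun lam _ => ?_
  rw [dcomp_add hLF x y lam, smul_add]

omit [CharZero K] [IsDomain A] in
lemma sigma_ksmul (c : K) (x : A) : sigmaRaw hLF (c • x) = c • sigmaRaw hLF x := by
  have hsub : (dcomp hLF (c • x)).support ⊆ (dcomp hLF x).support := by
    intro lam hl
    rw [Finsupp.mem_support_iff, dcomp_ksmul hLF c x lam] at hl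
    rw [Finsupp.mem_support_iff]
    intro h
    rw [h, smul_zero] at hl
    exact hl rfl
  rw [sigma_sum_over hLF hsub]
  simp only [sigmaRaw]
  rw [Finset.smul_sum]
  refine Finset.sum_congr rfl fun lam _ => ?_
  rw [dcomp_ksmul hLF c x lam, smul_comm]

omit [CharZero K] [IsDomain A] in
lemma dcomp_homog {x : A} {lam : K} (hx : x ∈ ES del lam) (mu : K) :
    dcomp hLF x mu = if mu = lam then x else 0 := by
  refine rep_eval hLF (s := {lam})
    (F := fun mu => if mu = lam then x else 0) (fun mu => ?_) (fun mu hmu => ?_) ?_ mu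
  · show (if mu = lam then x else 0) ∈ ES del mu
    by_cases h : mu = lam
    · rw [if_pos h, h]; exact hx
    · rw [if_neg h]; exact zero_mem _
  · rw [Finset.mem_singleton] at hmu
    show (if mu = lam then x else 0) = 0
    rw [if_neg hmu]
  · rw [Finset.sum_singleton, if_pos rfl]

omit [CharZero K] [IsDomain A] in
lemma sigma_homog {x : A} {lam : K} (hx : x ∈ ES del lam) :
    sigmaRaw hLF x = lam • x := by
  have hsub : (dcomp hLF x).support ⊆ {lam} := by
    intro mu hmu
    rw [Finsupp.mem_support_iff, dcomp_homog hLF hx mu] at hmu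
    rw [Finset.mem_singleton]
    by_contra hc
    rw [if_neg hc] at hmu
    exact hmu rfl
  rw [sigma_sum_over hLF hsub, Finset.sum_singleton, dcomp_homog hLF hx lam, if_pos rfl]

omit [CharZero K] [IsDomain A] in
lemma sigma_mul (x y : A) :
    sigmaRaw hLF (x * y) = x * sigmaRaw hLF y + y * sigmaRaw hLF x := by
  classical
  have hx := dcomp_sum hLF x
  have hy := dcomp_sum hLF y
  set sx := (dcomp hLF x).support with hsx
  set sy := (dcomp hLF y).support with hsy
  have hxy : x * y = ∑ p ∈ sx ×ˢ sy, dcomp hLF x p.1 * dcomp hLF y p.2 := by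
    conv_lhs => rw [← hx, ← hy]
    rw [Finset.sum_mul_sum, Finset.sum_product]
  have hadd : ∀ (s : Finset (K × K)) (f : K × K → A),
      sigmaRaw hLF (∑ p ∈ s, f p) = ∑ p ∈ s, sigmaRaw hLF (f p) := by
    intro s f
    induction s using Finset.induction_on with
    | empty =>
      simp only [Finset.sum_empty]
      have h0 : (0 : A) ∈ ES del 0 := zero_mem _
      rw [sigma_homog hLF h0, smul_zero]
    | insert _ _ hns IH =>
      rw [Finset.sum_insert hns, Finset.sum_insert hns, sigma_add hLF, IH]
  rw [hxy, hadd (sx ×ˢ sy) (fun p => dcomp hLF x p.1 * dcomp hLF y p.2)]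
  have hterm : ∀ p ∈ sx ×ˢ sy,
      sigmaRaw hLF (dcomp hLF x p.1 * dcomp hLF y p.2)
      = dcomp hLF x p.1 * (p.2 • dcomp hLF y p.2)
        + dcomp hLF y p.2 * (p.1 • dcomp hLF x p.1) := by
    intro p hp
    have hmem : dcomp hLF x p.1 * dcomp hLF y p.2 ∈ ES del (p.1 + p.2) :=
      ES_mul (dcomp_mem hLF x p.1) (dcomp_mem hLF y p.2)
    rw [sigma_homog hLF hmem, add_smul, mul_smul_comm, mul_smul_comm,
      mul_comm (dcomp hLF y p.2) (dcomp hLF x p.1)]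
    exact add_comm _ _
  rw [Finset.sum_congr rfl hterm, Finset.sum_add_distrib]
  congr 1
  · rw [Finset.sum_product]
    have h1 : ∀ lam ∈ sx, (∑ mu ∈ sy, dcomp hLF x lam * (mu • dcomp hLF y mu))
        = dcomp hLF x lam * sigmaRaw hLF y := by
      intro lam _
      rw [← Finset.mul_sum]
      rfl
    rw [Finset.sum_congr rfl h1, ← Finset.sum_mul, hx]
  · rw [Finset.sum_product]
    have h2 : ∀ lam ∈ sx, (∑ mu ∈ sy, dcomp hLF y mu * (lam • dcomp hLF x lam))
        = y * (lam • dcomp hLF x lam) := by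
      intro lam _
      rw [← Finset.sum_mul, hy]
    rw [Finset.sum_congr rfl h2, ← Finset.mul_sum]
    rfl

/-- the semisimple part as a derivation -/
noncomputable def sigmaD : Derivation K A A where
  toFun := sigmaRaw hLF
  map_add' := sigma_add hLF
  map_smul' := by
    intro c x
    simp only [RingHom.id_apply]
    exact sigma_ksmul hLF c x
  map_one_eq_zero' := by
    show sigmaRaw hLF 1 = 0
    rw [sigma_homog hLF (ES_one (del := del)), zero_smul]
  leibniz' := by
    intro a b
    show sigmaRaw hLF (a * b) = a • sigmaRaw hLF b + b • sigmaRaw hLF a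
    rw [smul_eq_mul, smul_eq_mul]
    exact sigma_mul hLF a b

/-- the locally nilpotent part -/
noncomputable def nuD : Derivation K A A := del - sigmaD hLF

omit [CharZero K] [IsDomain A] in
lemma sigmaD_apply (x : A) : sigmaD hLF x = sigmaRaw hLF x := rfl

omit [CharZero K] [IsDomain A] in
lemma nuD_apply (x : A) : nuD hLF x = del x - sigmaRaw hLF x := rfl

omit [CharZero K] [IsDomain A] in
lemma del_eq_sigma_add_nu (x : A) : del x = sigmaRaw hLF x + nuD hLF x := by
  rw [nuD_apply]; ring

omit [CharZero K] [IsDomain A] in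
lemma nu_homog {lam : K} {x : A} (hx : x ∈ ES del lam) : nuD hLF x = T del lam x := by
  rw [nuD_apply, sigma_homog hLF hx, T_apply]

omit [CharZero K] [IsDomain A] in
lemma nu_mem {lam : K} {x : A} (hx : x ∈ ES del lam) : nuD hLF x ∈ ES del lam := by
  rw [nu_homog hLF hx]; exact ES_T_inv hx

omit [CharZero K] [IsDomain A] in
lemma nu_pow_homog : ∀ (n : ℕ) {lam : K} {x : A}, x ∈ ES del lam →
    ((nuD hLF).toLinearMap ^ n) x = ((T del lam) ^ n) x := by
  intro n
  induction n with
  | zero => intro lam x _; rfl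
  | succ n IH =>
    intro lam x hx
    rw [dpow_succ_apply (nuD hLF) n x, pow_succ_apply, nu_homog hLF hx]
    exact IH (ES_T_inv hx)

omit [CharZero K] [IsDomain A] in
lemma nu_lnd : IsLND (nuD hLF) := by
  intro x
  have hk : ∀ lam : K, ∃ k, ((T del lam) ^ k) (dcomp hLF x lam) = 0 :=
    fun lam => (mem_ES_iff del lam _).mp (dcomp_mem hLF x lam)
  choose kf hkf using hk
  set n : ℕ := 1 + (dcomp hLF x).support.sup kf with hn
  refine ⟨n, by omega, ?_⟩
  have hx : x = ∑ lam ∈ (dcomp hLF x).support, dcomp hLF x lam := (dcomp_sum hLF x).symm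
  rw [hx, map_sum]
  refine Finset.sum_eq_zero fun lam hlam => ?_
  rw [nu_pow_homog hLF n (dcomp_mem hLF x lam)]
  refine end_pow_van (hkf lam) ?_
  have := Finset.le_sup (f := kf) hlam
  omega

omit [CharZero K] [IsDomain A] in
lemma sigma_nu_comm (x : A) : sigmaRaw hLF (nuD hLF x) = nuD hLF (sigmaRaw hLF x) := by
  have hx : x = ∑ lam ∈ (dcomp hLF x).support, dcomp hLF x lam := (dcomp_sum hLF x).symm
  have h1 : sigmaRaw hLF (nuD hLF x) = (sigmaD hLF).toLinearMap ((nuD hLF).toLinearMap x) := rfl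
  have h2 : nuD hLF (sigmaRaw hLF x) = (nuD hLF).toLinearMap ((sigmaD hLF).toLinearMap x) := rfl
  rw [h1, h2, hx, map_sum, map_sum, map_sum, map_sum]
  refine Finset.sum_congr rfl fun lam hlam => ?_
  have hmem := dcomp_mem hLF x lam
  show sigmaRaw hLF (nuD hLF (dcomp hLF x lam)) = nuD hLF (sigmaRaw hLF (dcomp hLF x lam))
  rw [sigma_homog hLF (nu_mem hLF hmem), sigma_homog hLF hmem, Derivation.map_smul]

omit [CharZero K] [IsDomain A] in
lemma nu_pow_sigma_comm : ∀ (n : ℕ) (x : A),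
    ((nuD hLF).toLinearMap ^ n) (sigmaRaw hLF x)
      = sigmaRaw hLF (((nuD hLF).toLinearMap ^ n) x) := by
  intro n
  induction n with
  | zero => intro x; rfl
  | succ n IH =>
    intro x
    rw [dpow_succ_apply (nuD hLF) n, dpow_succ_apply (nuD hLF) n]
    rw [show nuD hLF (sigmaRaw hLF x) = sigmaRaw hLF (nuD hLF x) from (sigma_nu_comm hLF x).symm]
    exact IH (nuD hLF x)

omit [CharZero K] [IsDomain A] in
lemma nu_del_van {x : A} {n : ℕ} (h : ((nuD hLF).toLinearMap ^ n) x = 0) :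
    ((nuD hLF).toLinearMap ^ n) (del x) = 0 := by
  have hδ : del x = sigmaRaw hLF x + nuD hLF x := del_eq_sigma_add_nu hLF x
  rw [hδ, map_add]
  have h1 : ((nuD hLF).toLinearMap ^ n) (sigmaRaw hLF x) = 0 := by
    rw [nu_pow_sigma_comm hLF n x, h]
    show sigmaRaw hLF 0 = 0
    rw [sigma_homog hLF (zero_mem (ES del 0)), smul_zero]
  have h2 : ((nuD hLF).toLinearMap ^ n) (nuD hLF x) = 0 := by
    rw [← dpow_succ_apply (nuD hLF) n x, dpow_succ_apply' (nuD hLF) n x, h, map_zero]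
  rw [h1, h2, add_zero]

omit [CharZero K] [IsDomain A] in
lemma ndeg_del_le {x : A} (hx : x ≠ 0) : ndeg (nuD hLF) (del x) ≤ ndeg (nuD hLF) x := by
  apply ndeg_le_of
  exact nu_del_van hLF (ndeg_spec1 (lnd_ex (nu_lnd hLF) x) hx)

section Weights

omit [CharZero K] [IsDomain A] in
lemma supp_nonempty {x : A} (hx : x ≠ 0) : (dcomp hLF x).support.Nonempty := by
  rw [Finset.nonempty_iff_ne_empty]
  intro h
  apply hx
  rw [← dcomp_sum hLF x, h, Finset.sum_empty]

variable [Module ℚ K]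

/-- the maximum of `φ` over the spectral support of `x` -/
noncomputable def wup (φ : Module.Dual ℚ K) (x : A) : ℚ :=
  if h : ((dcomp hLF x).support.image φ).Nonempty
  then ((dcomp hLF x).support.image φ).max' h else 0

omit [CharZero K] [IsDomain A] in
lemma wup_eq (φ : Module.Dual ℚ K) {x : A} (hx : x ≠ 0) :
    wup hLF φ x = ((dcomp hLF x).support.image φ).max'
      ((supp_nonempty hLF hx).image φ) := by
  rw [wup, dif_pos]

omit [CharZero K] [IsDomain A] in
lemma le_wup (φ : Module.Dual ℚ K) {x : A} (hx : x ≠ 0) {lam : K}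
    (hlam : lam ∈ (dcomp hLF x).support) : φ lam ≤ wup hLF φ x := by
  rw [wup_eq hLF φ hx]
  exact Finset.le_max' _ _ (Finset.mem_image_of_mem φ hlam)

omit [CharZero K] [IsDomain A] in
lemma exists_wup (φ : Module.Dual ℚ K) {x : A} (hx : x ≠ 0) :
    ∃ lam ∈ (dcomp hLF x).support, φ lam = wup hLF φ x := by
  rw [wup_eq hLF φ hx]
  have := Finset.max'_mem ((dcomp hLF x).support.image φ) ((supp_nonempty hLF hx).image φ)
  rw [Finset.mem_image] at this
  obtain ⟨lam, hlam, heq⟩ := this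
  exact ⟨lam, hlam, heq⟩

omit [CharZero K] [IsDomain A] in
lemma wup_mono (φ : Module.Dual ℚ K) {x y : A} (hy : y ≠ 0)
    (hsub : (dcomp hLF y).support ⊆ (dcomp hLF x).support) :
    wup hLF φ y ≤ wup hLF φ x := by
  have hx : x ≠ 0 := by
    intro h
    obtain ⟨lam, hlam⟩ := supp_nonempty hLF hy
    have := hsub hlam
    rw [h] at this
    rw [Finsupp.mem_support_iff] at this
    apply this
    have h0 : dcomp hLF (0 : A) lam = 0 := by
      refine rep_eval hLF (s := ∅) (F := fun _ => 0) (fun _ => zero_mem _)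
        (fun _ _ => rfl) (by rw [Finset.sum_empty]) lam
    exact h0
  rw [wup_eq hLF φ hx, wup_eq hLF φ hy]
  exact Finset.max'_subset _ (Finset.image_subset_image hsub)

omit [CharZero K] in
/-- additivity of the weight on products -/
theorem wup_mul (φ : Module.Dual ℚ K) {x y : A} (hx : x ≠ 0) (hy : y ≠ 0) :
    wup hLF φ (x * y) = wup hLF φ x + wup hLF φ y := by
  classical
  have hxyne : x * y ≠ 0 := mul_ne_zero hx hy
  set sx := (dcomp hLF x).support with hsx
  set sy := (dcomp hLF y).support with hsy
  have hxy : x * y = ∑ p ∈ sx ×ˢ sy, dcomp hLF x p.1 * dcomp hLF y p.2 := by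
    conv_lhs => rw [← dcomp_sum hLF x, ← dcomp_sum hLF y]
    rw [Finset.sum_mul_sum, Finset.sum_product]
  set S : Finset K := (sx ×ˢ sy).image (fun p => p.1 + p.2) with hS
  set F : K → A := fun kap => ∑ p ∈ (sx ×ˢ sy).filter (fun p => p.1 + p.2 = kap),
    dcomp hLF x p.1 * dcomp hLF y p.2 with hF
  have hFmem : ∀ kap, F kap ∈ ES del kap := by
    intro kap
    refine Submodule.sum_mem _ fun p hp => ?_
    rw [Finset.mem_filter] at hp
    rw [← hp.2]
    exact ES_mul (dcomp_mem hLF x p.1) (dcomp_mem hLF y p.2)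
  have hFzero : ∀ kap ∉ S, F kap = 0 := by
    intro kap hkap
    refine Finset.sum_eq_zero fun p hp => ?_
    rw [Finset.mem_filter] at hp
    exfalso
    exact hkap (hS ▸ Finset.mem_image.mpr ⟨p, hp.1, hp.2⟩)
  have hsumF : ∑ kap ∈ S, F kap = x * y := by
    have h1 : ∑ kap ∈ S, F kap = ∑ p ∈ (sx ×ˢ sy).filter (fun p => p.1 + p.2 ∈ S),
        dcomp hLF x p.1 * dcomp hLF y p.2 :=
      Finset.sum_fiberwise_eq_sum_filter (sx ×ˢ sy) S (fun p => p.1 + p.2) _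
    rw [Finset.filter_true_of_mem (fun p hp => Finset.mem_image_of_mem _ hp)] at h1
    exact h1.trans hxy.symm
  have hcomp : ∀ kap, dcomp hLF (x * y) kap = F kap :=
    rep_eval hLF hFmem hFzero hsumF
  -- upper bound
  have hub : wup hLF φ (x * y) ≤ wup hLF φ x + wup hLF φ y := by
    rw [wup_eq hLF φ hxyne]
    apply Finset.max'_le
    intro q hq
    rw [Finset.mem_image] at hq
    obtain ⟨kap, hkap, rfl⟩ := hq
    have hκ : F kap ≠ 0 := by rw [← hcomp kap]; exact Finsupp.mem_support_iff.mp hkap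
    have hκS : kap ∈ S := by
      by_contra h
      exact hκ (hFzero kap h)
    rw [hS, Finset.mem_image] at hκS
    obtain ⟨p, hp, rfl⟩ := hκS
    rw [Finset.mem_product] at hp
    rw [map_add]
    have h1 := le_wup hLF φ hx hp.1
    have h2 := le_wup hLF φ hy hp.2
    linarith
  -- lower bound
  set Tx : Finset K := sx.filter (fun lam => φ lam = wup hLF φ x) with hTx
  set Ty : Finset K := sy.filter (fun lam => φ lam = wup hLF φ y) with hTy
  have hX : (∑ lam ∈ Tx, dcomp hLF x lam) ≠ 0 := by
    intro h0
    obtain ⟨lam₀, hl₀, he₀⟩ := exists_wup hLF φ hx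
    have hmem₀ : lam₀ ∈ Tx := by rw [hTx, Finset.mem_filter]; exact ⟨hl₀, he₀⟩
    have := zero_sum Tx (fun lam => dcomp hLF x lam) (dcomp_mem hLF x) h0 lam₀ hmem₀
    exact Finsupp.mem_support_iff.mp hl₀ this
  have hY : (∑ lam ∈ Ty, dcomp hLF y lam) ≠ 0 := by
    intro h0
    obtain ⟨lam₀, hl₀, he₀⟩ := exists_wup hLF φ hy
    have hmem₀ : lam₀ ∈ Ty := by rw [hTy, Finset.mem_filter]; exact ⟨hl₀, he₀⟩
    have := zero_sum Ty (fun lam => dcomp hLF y lam) (dcomp_mem hLF y) h0 lam₀ hmem₀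
    exact Finsupp.mem_support_iff.mp hl₀ this
  have hfilters : (sx ×ˢ sy).filter
      (fun p => p.1 + p.2 ∈ S.filter (fun kap => φ kap = wup hLF φ x + wup hLF φ y))
      = Tx ×ˢ Ty := by
    ext p
    simp only [Finset.mem_filter, Finset.mem_product, hTx, hTy]
    constructor
    · rintro ⟨⟨hp1, hp2⟩, hmem, heq⟩
      rw [map_add] at heq
      have h1 := le_wup hLF φ hx hp1
      have h2 := le_wup hLF φ hy hp2
      exact ⟨⟨hp1, by linarith⟩, ⟨hp2, by linarith⟩⟩
    · rintro ⟨⟨hp1, he1⟩, hp2, he2⟩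
      refine ⟨⟨hp1, hp2⟩, ?_, ?_⟩
      · exact Finset.mem_image_of_mem _ (Finset.mem_product.mpr ⟨hp1, hp2⟩)
      · rw [map_add, he1, he2]
  have hfs : ∑ kap ∈ S.filter (fun kap => φ kap = wup hLF φ x + wup hLF φ y), F kap
      = (∑ lam ∈ Tx, dcomp hLF x lam) * (∑ lam ∈ Ty, dcomp hLF y lam) := by
    have h1 : ∑ kap ∈ S.filter (fun kap => φ kap = wup hLF φ x + wup hLF φ y), F kap
        = ∑ p ∈ (sx ×ˢ sy).filter (fun p => p.1 + p.2 ∈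
            S.filter (fun kap => φ kap = wup hLF φ x + wup hLF φ y)),
          dcomp hLF x p.1 * dcomp hLF y p.2 :=
      Finset.sum_fiberwise_eq_sum_filter (sx ×ˢ sy) _ (fun p => p.1 + p.2) _
    rw [hfilters] at h1
    have h2 : (∑ lam ∈ Tx, dcomp hLF x lam) * (∑ lam ∈ Ty, dcomp hLF y lam)
        = ∑ p ∈ Tx ×ˢ Ty, dcomp hLF x p.1 * dcomp hLF y p.2 := by
      rw [Finset.sum_mul_sum, Finset.sum_product]
    exact h1.trans h2.symm
  have hne : ∑ kap ∈ S.filter (fun kap => φ kap = wup hLF φ x + wup hLF φ y), F kap ≠ 0 := by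
    rw [hfs]
    exact mul_ne_zero hX hY
  obtain ⟨kap, hkmem, hkne⟩ := Finset.exists_ne_zero_of_sum_ne_zero hne
  rw [Finset.mem_filter] at hkmem
  have hksupp : kap ∈ (dcomp hLF (x * y)).support := by
    rw [Finsupp.mem_support_iff, hcomp kap]
    exact hkne
  have hlb := le_wup hLF φ hxyne hksupp
  rw [hkmem.2] at hlb
  linarith

omit [CharZero K] [IsDomain A] in
lemma supp_sigma_subset (x : A) :
    (dcomp hLF (sigmaRaw hLF x)).support ⊆ (dcomp hLF x).support := by
  intro lam hlam
  rw [Finsupp.mem_support_iff] at hlam ⊢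
  rw [dcomp_sigma hLF x lam] at hlam
  intro h
  rw [h, smul_zero] at hlam
  exact hlam rfl

omit [CharZero K] [IsDomain A] in
lemma wup_nonneg_pair (φ : Module.Dual ℚ K) {x : A} (hx : x ≠ 0) :
    0 ≤ wup hLF φ x + wup hLF (-φ) x := by
  obtain ⟨lam, hlam, _⟩ := exists_wup hLF φ hx
  have h1 := le_wup hLF φ hx hlam
  have h2 := le_wup hLF (-φ) hx hlam
  rw [LinearMap.neg_apply] at h2
  linarith

omit [CharZero K] [IsDomain A] in
lemma homog_of_wup {x : A} (hx : x ≠ 0)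
    (hw : ∀ φ : Module.Dual ℚ K, wup hLF φ x + wup hLF (-φ) x ≤ 0) :
    ∃ alph : K, x ∈ ES del alph := by
  obtain ⟨alph, halph⟩ := supp_nonempty hLF hx
  have heq : ∀ lam ∈ (dcomp hLF x).support, lam = alph := by
    intro lam hlam
    have hzero : ∀ φ : Module.Dual ℚ K, φ (lam - alph) = 0 := by
      intro φ
      have h1 := le_wup hLF φ hx hlam
      have h2 := le_wup hLF (-φ) hx halph
      have h3 := le_wup hLF φ hx halph
      have h4 := le_wup hLF (-φ) hx hlam
      rw [LinearMap.neg_apply] at h2 h4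
      have hs := hw φ
      rw [map_sub]
      linarith
    have := (Module.forall_dual_apply_eq_zero_iff ℚ (lam - alph)).mp hzero
    rw [sub_eq_zero] at this
    exact this
  have hsupp : (dcomp hLF x).support = {alph} := by
    apply Finset.eq_singleton_iff_unique_mem.mpr
    exact ⟨halph, heq⟩
  have hxsum := dcomp_sum hLF x
  rw [hsupp, Finset.sum_singleton] at hxsum
  exact ⟨alph, hxsum ▸ dcomp_mem hLF x alph⟩

end Weights

end Decomp

end LayerThree

section Final

omit [CharZero K] [IsDomain A] in
lemma fd_pow (d : Derivation K A A) {f : A} (hf : d f = 0) :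
    ∀ (n : ℕ) (x : A), ((f • d).toLinearMap ^ n) x = f ^ n * ((d.toLinearMap ^ n) x) := by
  intro n
  induction n with
  | zero => intro x; simp
  | succ n IH =>
    intro x
    rw [dpow_succ_apply' (f • d) n x, IH x]
    show f • d (f ^ n * (d.toLinearMap ^ n) x) = f ^ (n+1) * ((d.toLinearMap ^ (n+1)) x)
    rw [Derivation.leibniz, d_pow_ker d hf n, smul_zero, add_zero]
    rw [dpow_succ_apply' d n x]
    rw [smul_eq_mul, smul_eq_mul]
    ring

omit [CharZero K] [IsDomain A] in
lemma fd_lnd {d : Derivation K A A} {f : A} (hd : IsLND d) (hf : d f = 0) :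
    IsLND (f • d) := by
  intro x
  obtain ⟨n, hn1, h0⟩ := hd x
  exact ⟨n, hn1, by rw [fd_pow d hf n x, h0, mul_zero]⟩

/-- main construction: assuming there is `a ∈ ker d₁ \ ker d₂` -/
theorem main_half [IsAlgClosed K] (d₁ d₂ : Derivation K A A) (h₁ : IsLND d₁) (h₂ : IsLND d₂)
    (hne₁ : d₁ ≠ 0) {a : A} (ha1 : d₁ a = 0) (ha2 : d₂ a ≠ 0) :
    ∃ f₁ f₂ : A, d₁ f₁ = 0 ∧ d₂ f₂ = 0 ∧ ¬ IsLocFin (f₁ • d₁ + f₂ • d₂) := by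
  have hb : ∃ b, d₂ b = 0 ∧ d₁ b ≠ 0 := by
    by_contra hc
    push_neg at hc
    exact hne₁ (ker_not_sub h₂ hc ha1 ha2)
  obtain ⟨b, hb2, hb1⟩ := hb
  have ha0 : a ≠ 0 := fun h => ha2 (h ▸ map_zero d₂)
  have hb0 : b ≠ 0 := fun h => hb1 (h ▸ map_zero d₁)
  refine ⟨a^2, b^2, d_pow_ker d₁ ha1 2, d_pow_ker d₂ hb2 2, ?_⟩
  intro hLF
  set del : Derivation K A A := a^2 • d₁ + b^2 • d₂ with hdel
  have hδa : del a = b^2 * d₂ a := by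
    show (a^2 • d₁ + b^2 • d₂) a = b^2 * d₂ a
    rw [Derivation.add_apply, Derivation.smul_apply, Derivation.smul_apply, ha1,
      smul_zero, zero_add, smul_eq_mul]
  have hδb : del b = a^2 * d₁ b := by
    show (a^2 • d₁ + b^2 • d₂) b = a^2 * d₁ b
    rw [Derivation.add_apply, Derivation.smul_apply, Derivation.smul_apply, hb2,
      smul_zero, add_zero, smul_eq_mul]
  have hδane : del a ≠ 0 := by
    rw [hδa]; exact mul_ne_zero (pow_ne_zero _ hb0) ha2
  have hδbne : del b ≠ 0 := by
    rw [hδb]; exact mul_ne_zero (pow_ne_zero _ ha0) hb1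
  have hnl : IsLND (nuD hLF) := nu_lnd hLF
  -- degree chain for the nilpotent part
  have e1 : ndeg (nuD hLF) (del a) ≤ ndeg (nuD hLF) a := ndeg_del_le hLF ha0
  have e2 : ndeg (nuD hLF) (del b) ≤ ndeg (nuD hLF) b := ndeg_del_le hLF hb0
  rw [hδa] at e1
  rw [hδb] at e2
  have hsplit1 : b^2 * d₂ a = b * (b * d₂ a) := by ring
  have hsplit2 : a^2 * d₁ b = a * (a * d₁ b) := by ring
  rw [hsplit1, ndeg_mul hnl hb0 (mul_ne_zero hb0 ha2), ndeg_mul hnl hb0 ha2] at e1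
  rw [hsplit2, ndeg_mul hnl ha0 (mul_ne_zero ha0 hb1), ndeg_mul hnl ha0 hb1] at e2
  have hνa0 : nuD hLF a = 0 :=
    (ndeg_zero_iff (lnd_ex hnl a) ha0).mp (by omega)
  have hνb0 : nuD hLF b = 0 :=
    (ndeg_zero_iff (lnd_ex hnl b) hb0).mp (by omega)
  have hσa : sigmaRaw hLF a = b^2 * d₂ a := by
    have := del_eq_sigma_add_nu hLF a
    rw [hνa0, add_zero] at this
    rw [← this, hδa]
  have hσb : sigmaRaw hLF b = a^2 * d₁ b := by
    have := del_eq_sigma_add_nu hLF b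
    rw [hνb0, add_zero] at this
    rw [← this, hδb]
  have hσane : sigmaRaw hLF a ≠ 0 := by rw [hσa]; rw [← hδa]; exact hδane
  have hσbne : sigmaRaw hLF b ≠ 0 := by rw [hσb]; rw [← hδb]; exact hδbne
  -- weight inequalities
  have hwa : ∀ φ : Module.Dual ℚ K, wup hLF φ a + wup hLF (-φ) a ≤ 0 := by
    intro φ
    have key : ∀ ψ : Module.Dual ℚ K,
        wup hLF ψ b + (wup hLF ψ b + wup hLF ψ (d₂ a)) ≤ wup hLF ψ a
        ∧ wup hLF ψ a + (wup hLF ψ a + wup hLF ψ (d₁ b)) ≤ wup hLF ψ b := by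
      intro ψ
      constructor
      · have hmono := wup_mono hLF ψ hσane (supp_sigma_subset hLF a)
        rw [hσa, hsplit1, wup_mul hLF ψ hb0 (mul_ne_zero hb0 ha2),
          wup_mul hLF ψ hb0 ha2] at hmono
        exact hmono
      · have hmono := wup_mono hLF ψ hσbne (supp_sigma_subset hLF b)
        rw [hσb, hsplit2, wup_mul hLF ψ ha0 (mul_ne_zero ha0 hb1),
          wup_mul hLF ψ ha0 hb1] at hmono
        exact hmono
    obtain ⟨k1, k2⟩ := key φ
    obtain ⟨k3, k4⟩ := key (-φ)
    have n1 := wup_nonneg_pair hLF φ ha2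
    have n2 := wup_nonneg_pair hLF φ hb1
    have n3 := wup_nonneg_pair hLF φ hb0
    linarith
  obtain ⟨alph, hαmem⟩ := homog_of_wup hLF ha0 hwa
  have hδa_eq : del a = alph • a := by
    rw [del_eq_sigma_add_nu hLF a, hνa0, add_zero, sigma_homog hLF hαmem]
  have hd1δa : d₁ (del a) = 0 := by
    rw [hδa_eq, Derivation.map_smul, ha1, smul_zero]
  rw [hδa] at hd1δa
  have hfc := fact_closed h₁ (mul_ne_zero (pow_ne_zero 2 hb0) ha2) hd1δa
  have hb2ne : b * b ≠ 0 := mul_ne_zero hb0 hb0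
  have hfc2 := fact_closed h₁ hb2ne (by rw [← pow_two]; exact hfc.1)
  exact hb1 hfc2.1

end Final

end Stmt5

theorem stmt5 {K A : Type*} [Field K] [IsAlgClosed K] [CharZero K]
    [CommRing A] [IsDomain A] [Algebra K A] [Algebra.FiniteType K A]
    (d₁ d₂ : Derivation K A A) (h₁ : IsLND d₁) (h₂ : IsLND d₂)
    (hne₁ : d₁ ≠ 0) (hne₂ : d₂ ≠ 0)
    (hker : LinearMap.ker d₁.toLinearMap ≠ LinearMap.ker d₂.toLinearMap) :
    (∃ f₁ f₂ : A, d₁ f₁ = 0 ∧ d₂ f₂ = 0 ∧ ¬ IsLocFin (f₁ • d₁ + f₂ • d₂)) ∧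
    (∃ δ : Derivation K A A,
      δ ∈ Submodule.span K {δ' : Derivation K A A | IsLND δ'} ∧
      ¬ IsLocFin δ) := by
  have hasym : ∃ a : A, (d₁ a = 0 ∧ d₂ a ≠ 0) ∨ (d₂ a = 0 ∧ d₁ a ≠ 0) := by
    by_contra hc
    push_neg at hc
    apply hker
    ext x
    rw [LinearMap.mem_ker, LinearMap.mem_ker]
    show d₁ x = 0 ↔ d₂ x = 0
    constructor
    · intro h
      exact (hc x).1 h
    · intro h
      exact (hc x).2 h
  obtain ⟨a, ha⟩ := hasym
  have hmain : ∃ f₁ f₂ : A, d₁ f₁ = 0 ∧ d₂ f₂ = 0 ∧ ¬ IsLocFin (f₁ • d₁ + f₂ • d₂) := by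
    rcases ha with ⟨ha1, ha2⟩ | ⟨ha1, ha2⟩
    · exact Stmt5.main_half d₁ d₂ h₁ h₂ hne₁ ha1 ha2
    · obtain ⟨g₁, g₂, hg1, hg2, hng⟩ := Stmt5.main_half d₂ d₁ h₂ h₁ hne₂ ha1 ha2
      exact ⟨g₂, g₁, hg2, hg1, by rwa [add_comm]⟩
  obtain ⟨f₁, f₂, hf1, hf2, hnlf⟩ := hmain
  refine ⟨⟨f₁, f₂, hf1, hf2, hnlf⟩, ⟨f₁ • d₁ + f₂ • d₂, ?_, hnlf⟩⟩
  apply Submodule.add_mem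
  · exact Submodule.subset_span (Set.mem_setOf_eq ▸ Stmt5.fd_lnd h₁ hf1)
  · exact Submodule.subset_span (Set.mem_setOf_eq ▸ Stmt5.fd_lnd h₂ hf2)
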